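/- Let S be a 3×3 diagonal matrix with positive diagonal entries, R_p a 3×3 rotation matrix, Σ := R_p S² R_pᵀ, μ ∈ ℝ³ nonzero, c := √(μᵀΣ⁻¹μ), and 0 < κ < c². Let R₀ be any rotation matrix with R₀v = μ̂, where μ̂ := (1/c)S⁻¹R_pᵀμ and v := (0,0,1), and set Q := R_p S R₀, a := √(κ/(c²−κ)). Then the boundary set E equals the image of the unit circle under Φ⁻¹, i.e., E = { ((c² − κ)/c) · Q · H(a·u) : u ∈ ℝ², ‖u‖ = 1 }; in particular E is a 2D ellipse embedded in 3D space, isomorphic to the unit circle. -/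

import Mathlib

open Matrix

lemma dotAA (A : Matrix (Fin 3) (Fin 3) ℝ) (x z : Fin 3 → ℝ) :
    x ⬝ᵥ (Aᵀ * A).mulVec z = A.mulVec x ⬝ᵥ A.mulVec z := by
  rw [← mulVec_mulVec, dotProduct_mulVec, vecMul_transpose]

lemma dot_self_nonneg (x : Fin 3 → ℝ) : 0 ≤ x ⬝ᵥ x :=
  Finset.sum_nonneg fun i _ => mul_self_nonneg _

set_option maxHeartbeats 1000000 in
/-- The boundary set `E` equals the image of the unit circle under
`Φ⁻¹(u) = ((c² − κ)/c)·Q·H(a·u)` with `Q = R_p S R₀`; i.e. `E` is a 2D ellipse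
embedded in 3D space, isomorphic to the unit circle. -/
theorem stmt_10 (d : Fin 3 → ℝ) (hd : ∀ i, 0 < d i)
    (Rp : Matrix (Fin 3) (Fin 3) ℝ) (hRp : Rpᵀ * Rp = 1) (hRpdet : Rp.det = 1)
    (μ : Fin 3 → ℝ) (hμ : μ ≠ 0) (κ : ℝ)
    (R0 : Matrix (Fin 3) (Fin 3) ℝ) (hR0 : R0ᵀ * R0 = 1) (hR0det : R0.det = 1) :
    let Sm : Matrix (Fin 3) (Fin 3) ℝ := Matrix.diagonal d
    let Cov : Matrix (Fin 3) (Fin 3) ℝ := Rp * (Sm * Sm) * Rpᵀ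
    let c : ℝ := Real.sqrt (μ ⬝ᵥ Cov⁻¹.mulVec μ)
    let μhat : Fin 3 → ℝ := (1 / c) • (Sm⁻¹ * Rpᵀ).mulVec μ
    let v : Fin 3 → ℝ := ![0, 0, 1]
    let τ : (Fin 3 → ℝ) → ℝ := fun x => (x ⬝ᵥ Cov⁻¹.mulVec μ) / (x ⬝ᵥ Cov⁻¹.mulVec x)
    let Dray : (Fin 3 → ℝ) → ℝ := fun x => (τ x • x - μ) ⬝ᵥ Cov⁻¹.mulVec (τ x • x - μ)
    let E : Set (Fin 3 → ℝ) := {p | ∃ x : Fin 3 → ℝ, x ≠ 0 ∧ Dray x = κ ∧ p = τ x • x}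
    let Q : Matrix (Fin 3) (Fin 3) ℝ := Rp * Sm * R0
    let a : ℝ := Real.sqrt (κ / (c ^ 2 - κ))
    0 < κ → κ < c ^ 2 → R0.mulVec v = μhat →
      E = {p | ∃ u : Fin 2 → ℝ, u ⬝ᵥ u = 1 ∧
            p = ((c ^ 2 - κ) / c) • Q.mulVec ![a * u 0, a * u 1, 1]} := by
  intro Sm Cov c μhat v τ Dray E Q a hκ hκc hR0v
  -- diagonal matrix inverse
  have hdne : ∀ i, d i ≠ 0 := fun i => (hd i).ne'
  set Sinv : Matrix (Fin 3) (Fin 3) ℝ := Matrix.diagonal (fun i => (d i)⁻¹) with hSinvdef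
  have hSS : Sm * Sinv = 1 := by
    rw [hSinvdef, Matrix.diagonal_mul_diagonal]
    rw [show (fun i => d i * (d i)⁻¹) = fun _ : Fin 3 => (1:ℝ) from
      funext fun i => mul_inv_cancel₀ (hdne i)]
    exact Matrix.diagonal_one
  have hSS' : Sinv * Sm = 1 := mul_eq_one_comm.mp hSS
  have hSinv : Sm⁻¹ = Sinv := Matrix.inv_eq_right_inv hSS
  have hRpRp : Rp * Rpᵀ = 1 := mul_eq_one_comm.mp hRp
  have hR0R0 : R0 * R0ᵀ = 1 := mul_eq_one_comm.mp hR0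
  -- whitening matrix W and its inverse P
  set W : Matrix (Fin 3) (Fin 3) ℝ := Sm⁻¹ * Rpᵀ with hWdef
  set P : Matrix (Fin 3) (Fin 3) ℝ := Rp * Sm with hPdef
  have hWP : W * P = 1 := by
    rw [hWdef, hPdef, hSinv, Matrix.mul_assoc, ← Matrix.mul_assoc Rpᵀ Rp Sm, hRp,
      Matrix.one_mul, hSS']
  have hPW : P * W = 1 := mul_eq_one_comm.mp hWP
  have hCov : Cov = P * Pᵀ := by
    show Rp * (Sm * Sm) * Rpᵀ = P * Pᵀ
    rw [hPdef, Matrix.transpose_mul, Matrix.diagonal_transpose, Matrix.mul_assoc,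
      Matrix.mul_assoc, Matrix.mul_assoc]
  have hCovInv : Cov⁻¹ = Wᵀ * W := by
    apply Matrix.inv_eq_right_inv
    have hPt : Pᵀ * Wᵀ = 1 := by rw [← Matrix.transpose_mul, hWP, Matrix.transpose_one]
    rw [hCov, Matrix.mul_assoc, ← Matrix.mul_assoc Pᵀ Wᵀ W, hPt, Matrix.one_mul, hPW]
  have hdot : ∀ x z : Fin 3 → ℝ, x ⬝ᵥ Cov⁻¹.mulVec z = W.mulVec x ⬝ᵥ W.mulVec z := by
    intro x z; rw [hCovInv, dotAA]
  -- whitened mean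
  set m : Fin 3 → ℝ := W.mulVec μ with hmdef
  have hrecP : ∀ p : Fin 3 → ℝ, P.mulVec (W.mulVec p) = p := by
    intro p; rw [mulVec_mulVec, hPW, Matrix.one_mulVec]
  have hWne : ∀ p : Fin 3 → ℝ, p ≠ 0 → W.mulVec p ≠ 0 := by
    intro p hp h
    exact hp (by rw [← hrecP p, h, Matrix.mulVec_zero])
  have hmne : m ≠ 0 := hWne μ hμ
  have hc2 : c ^ 2 = m ⬝ᵥ m := by
    have : c = Real.sqrt (m ⬝ᵥ m) := by
      show Real.sqrt (μ ⬝ᵥ Cov⁻¹.mulVec μ) = _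
      rw [hdot]
    rw [this, Real.sq_sqrt (dot_self_nonneg m)]
  have hcκ : 0 < c ^ 2 - κ := by linarith
  have hcpos : 0 < c := by
    rcases lt_trichotomy c 0 with h | h | h
    · exact absurd (Real.sqrt_nonneg _ : (0:ℝ) ≤ c) (not_le.mpr h)
    · exfalso; rw [h] at hκc; nlinarith
    · exact h
  have hcne : c ≠ 0 := hcpos.ne'
  have ha2 : a ^ 2 = κ / (c ^ 2 - κ) :=
    Real.sq_sqrt (le_of_lt (div_pos hκ hcκ))
  have hapos : 0 < a := Real.sqrt_pos.mpr (div_pos hκ hcκ)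
  have hane : a ≠ 0 := hapos.ne'
  -- the rotated mean
  have hmv : m = c • R0.mulVec v := by
    rw [hR0v]
    show m = c • ((1 / c) • W.mulVec μ)
    rw [smul_smul, mul_one_div, div_self hcne, one_smul, hmdef]
  have hrot : ∀ x z : Fin 3 → ℝ, R0.mulVec x ⬝ᵥ R0.mulVec z = x ⬝ᵥ z := by
    intro x z; rw [← dotAA, hR0, Matrix.one_mulVec]
  have hrotT : ∀ x z : Fin 3 → ℝ, R0ᵀ.mulVec x ⬝ᵥ R0ᵀ.mulVec z = x ⬝ᵥ z := by
    intro x z; rw [← dotAA, Matrix.transpose_transpose, hR0R0, Matrix.one_mulVec]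
  have hWQ : W * Q = R0 := by
    show W * (Rp * Sm * R0) = R0
    rw [hWdef, hSinv, Matrix.mul_assoc Rp Sm R0, Matrix.mul_assoc Sinv Rpᵀ _,
      ← Matrix.mul_assoc Rpᵀ Rp (Sm * R0), hRp, Matrix.one_mul,
      ← Matrix.mul_assoc, hSS', Matrix.one_mul]
  have hQP : Q = P * R0 := by rw [hPdef]
  -- characterization of the conditions
  have hvdot : ∀ w : Fin 3 → ℝ, w ⬝ᵥ v = w 2 := by
    intro w
    show w ⬝ᵥ ![0,0,1] = w 2
    simp [dotProduct, Fin.sum_univ_three]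
  -- prove set equality
  ext p
  constructor
  · rintro ⟨x, hx0, hDx, rfl⟩
    -- whitened coordinates
    set y : Fin 3 → ℝ := W.mulVec x with hydef
    have hy0 : y ≠ 0 := hWne x hx0
    have hyy : 0 < y ⬝ᵥ y := by
      rcases (dot_self_nonneg y).lt_or_eq with h | h
      · exact h
      · exact absurd ((dotProduct_self_eq_zero).mp h.symm) hy0
    have hτ : τ x = (y ⬝ᵥ m) / (y ⬝ᵥ y) := by
      show (x ⬝ᵥ Cov⁻¹.mulVec μ) / (x ⬝ᵥ Cov⁻¹.mulVec x) = _
      rw [hdot, hdot]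
    set t : ℝ := τ x with htdef
    have hWd : W.mulVec (t • x - μ) = t • y - m := by
      rw [Matrix.mulVec_sub, Matrix.mulVec_smul]
    have hDx' : (t • y - m) ⬝ᵥ (t • y - m) = κ := by
      rw [← hWd, ← hdot]
      exact hDx
    have hexp : (t • y - m) ⬝ᵥ (t • y - m)
        = t * t * (y ⬝ᵥ y) - 2 * t * (y ⬝ᵥ m) + m ⬝ᵥ m := by
      simp only [sub_dotProduct, dotProduct_sub, smul_dotProduct,
        dotProduct_smul, smul_eq_mul, dotProduct_comm m y]
      ring
    have hts : t * (y ⬝ᵥ y) = y ⬝ᵥ m := by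
      rw [hτ, div_mul_cancel₀ _ hyy.ne']
    have hkey : t * (y ⬝ᵥ m) = c ^ 2 - κ := by
      have h1 : t * t * (y ⬝ᵥ y) - 2 * t * (y ⬝ᵥ m) + m ⬝ᵥ m = κ := by
        rw [← hexp, hDx']
      have h2 : t * t * (y ⬝ᵥ y) = t * (y ⬝ᵥ m) := by
        rw [mul_assoc, hts]
      rw [hc2]
      nlinarith [h1, h2]
    -- the whitened point q = t • y satisfies both conditions
    have hq1 : W.mulVec (t • x) ⬝ᵥ W.mulVec (t • x) = c ^ 2 - κ := by
      rw [Matrix.mulVec_smul, smul_dotProduct, dotProduct_smul]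
      simp only [smul_eq_mul, ← hydef]
      have : t * (t * (y ⬝ᵥ y)) = t * (y ⬝ᵥ m) := by rw [hts]
      rw [this, hkey]
    have hq2 : W.mulVec (t • x) ⬝ᵥ m = c ^ 2 - κ := by
      rw [Matrix.mulVec_smul, smul_dotProduct]
      simp only [smul_eq_mul, ← hydef]
      rw [hkey]
    -- build u
    set q : Fin 3 → ℝ := W.mulVec (t • x) with hqdef
    set w : Fin 3 → ℝ := R0ᵀ.mulVec q with hwdef
    have hqw : q = R0.mulVec w := by
      rw [hwdef, mulVec_mulVec, hR0R0, Matrix.one_mulVec]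
    have hw2 : w 2 = (c ^ 2 - κ) / c := by
      rw [← hvdot w, hwdef]
      have : R0ᵀ.mulVec q ⬝ᵥ v = q ⬝ᵥ R0.mulVec v := by
        rw [Matrix.mulVec_transpose, ← Matrix.dotProduct_mulVec]
      rw [this]
      have : q ⬝ᵥ R0.mulVec v = (1/c) * (q ⬝ᵥ m) := by
        rw [hmv, dotProduct_smul, smul_eq_mul]
        field_simp
      rw [this, hq2]
      field_simp
    have hww : w ⬝ᵥ w = c ^ 2 - κ := by
      rw [hwdef, hrotT]; exact hq1
    have ha2' : a ^ 2 * (c ^ 2 - κ) = κ := by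
      rw [ha2]; field_simp
    have hsum01 : c ^ 2 * (w 0 * w 0 + w 1 * w 1) = κ * (c ^ 2 - κ) := by
      have h3 : w ⬝ᵥ w = w 0 * w 0 + w 1 * w 1 + w 2 * w 2 := by
        simp [dotProduct, Fin.sum_univ_three]
      rw [hww, hw2] at h3
      have h4 : w 0 * w 0 + w 1 * w 1
          = (c ^ 2 - κ) - ((c ^ 2 - κ) / c) * ((c ^ 2 - κ) / c) := by linarith [h3]
      rw [h4]
      field_simp
      ring
    refine ⟨![c / ((c ^ 2 - κ) * a) * w 0, c / ((c ^ 2 - κ) * a) * w 1], ?_, ?_⟩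
    · show _ ⬝ᵥ _ = (1:ℝ)
      simp only [dotProduct, Fin.sum_univ_two, Matrix.cons_val_zero, Matrix.cons_val_one,
        Matrix.head_cons]
      have hane2 : (c ^ 2 - κ) * a ≠ 0 := mul_ne_zero hcκ.ne' hane
      field_simp
      linear_combination hsum01 - (c ^ 2 - κ) * ha2'
    · -- p = τ x • x equals the parametrized point
      have hH : ((c ^ 2 - κ) / c) • (![a * (![c / ((c ^ 2 - κ) * a) * w 0,
          c / ((c ^ 2 - κ) * a) * w 1] : Fin 2 → ℝ) 0,
          a * (![c / ((c ^ 2 - κ) * a) * w 0, c / ((c ^ 2 - κ) * a) * w 1] : Fin 2 → ℝ) 1,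
          1] : Fin 3 → ℝ) = w := by
        funext i
        fin_cases i
        · show (c ^ 2 - κ) / c * (a * (c / ((c ^ 2 - κ) * a) * w 0)) = w 0
          field_simp
        · show (c ^ 2 - κ) / c * (a * (c / ((c ^ 2 - κ) * a) * w 1)) = w 1
          field_simp
        · show (c ^ 2 - κ) / c * 1 = w 2
          rw [mul_one, hw2]
      have : t • x = Q.mulVec w := by
        have h4 : t • x = P.mulVec q := by rw [hqdef, hrecP]
        rw [h4, hqw, mulVec_mulVec, ← hQP]
      rw [this, ← Matrix.mulVec_smul, hH]
  · rintro ⟨u, hu, rfl⟩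
    -- the candidate point
    set H : Fin 3 → ℝ := ![a * u 0, a * u 1, 1] with hHdef
    set p : Fin 3 → ℝ := ((c ^ 2 - κ) / c) • Q.mulVec H with hpdef
    have hWp : W.mulVec p = ((c ^ 2 - κ) / c) • R0.mulVec H := by
      rw [hpdef, Matrix.mulVec_smul, mulVec_mulVec, hWQ]
    have hHH : H ⬝ᵥ H = c ^ 2 / (c ^ 2 - κ) := by
      have hu' : u 0 * u 0 + u 1 * u 1 = 1 := by
        rw [← hu]; simp [dotProduct, Fin.sum_univ_two]
      have hcomp : H ⬝ᵥ H = a * u 0 * (a * u 0) + a * u 1 * (a * u 1) + 1 := by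
        simp [hHdef, dotProduct, Fin.sum_univ_three]
      rw [hcomp]
      have h5 : a * u 0 * (a * u 0) + a * u 1 * (a * u 1)
          = a ^ 2 * (u 0 * u 0 + u 1 * u 1) := by ring
      rw [h5, hu', mul_one, ha2]
      field_simp
      ring
    have hHv : H ⬝ᵥ v = 1 := by
      rw [hvdot]
      show (![a * u 0, a * u 1, 1] : Fin 3 → ℝ) 2 = 1
      simp
    have hcond1 : W.mulVec p ⬝ᵥ W.mulVec p = c ^ 2 - κ := by
      rw [hWp, smul_dotProduct, dotProduct_smul, hrot, hHH]
      simp only [smul_eq_mul]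
      have hne3 : c * (c * (c ^ 2 - κ)) ≠ 0 := mul_ne_zero hcne (mul_ne_zero hcne hcκ.ne')
      rw [div_mul_div_comm, div_mul_div_comm, div_eq_iff hne3]
      ring
    have hcond2 : W.mulVec p ⬝ᵥ m = c ^ 2 - κ := by
      rw [hWp, hmv, smul_dotProduct, dotProduct_smul, hrot, hHv]
      simp only [smul_eq_mul]
      field_simp
    -- membership in E, with x := p and τ p = 1
    have hp0 : p ≠ 0 := by
      intro h
      rw [h, Matrix.mulVec_zero, zero_dotProduct] at hcond1
      linarith
    have hτp : τ p = 1 := by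
      show (p ⬝ᵥ Cov⁻¹.mulVec μ) / (p ⬝ᵥ Cov⁻¹.mulVec p) = 1
      rw [hdot, hdot, ← hmdef, hcond1, hcond2]
      field_simp
    refine ⟨p, hp0, ?_, by rw [hτp, one_smul]⟩
    show (τ p • p - μ) ⬝ᵥ Cov⁻¹.mulVec (τ p • p - μ) = κ
    rw [hτp, one_smul, hdot, Matrix.mulVec_sub, sub_dotProduct,
      dotProduct_sub, dotProduct_sub, ← hmdef, hcond1, hcond2,
      dotProduct_comm m (W.mulVec p), hcond2, ← hc2]
    ring
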